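/- arXiv:0905.4411 — 4 statements merged into one kernel-verified Lean document; each statement's English description precedes it below -/
import Mathlib

section
/- For all real numbers x, y ≥ 0 and p ≥ 2, one has (x - y)·(x^(p-1) - y^(p-1)) ≥ (4(p-1)/p²)·(x^(p/2) - y^(p/2))². -/
open MeasureTheory Set

/-- Cauchy–Schwarz step: for `0 ≤ y ≤ x` and `0 ≤ c`,
`(∫ t in Ioc y x, t ^ c)^2 ≤ (x - y) * ∫ t in Ioc y x, t ^ (2*c)`. -/
lemma aux_cs (x y c : ℝ) (hy : 0 ≤ y) (hxy : y ≤ x) (hc : 0 ≤ c) :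
    (∫ t in Ioc y x, t ^ c) ^ 2 ≤ (x - y) * ∫ t in Ioc y x, t ^ (2 * c) := by
  set μ := volume.restrict (Ioc y x) with hμ
  have hmeas : MeasurableSet (Ioc y x) := measurableSet_Ioc
  have hpos : ∀ᵐ t ∂μ, t ∈ Ioc y x := ae_restrict_mem hmeas
  have hf_nonneg : 0 ≤ᵐ[μ] fun t : ℝ => t ^ c := by
    filter_upwards [hpos] with t ht
    exact Real.rpow_nonneg (le_of_lt (lt_of_le_of_lt hy ht.1)) c
  have hg_nonneg : 0 ≤ᵐ[μ] fun _ : ℝ => (1 : ℝ) := Filter.Eventually.of_forall fun _ => zero_le_one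
  have hconj : Real.HolderConjugate 2 2 := by constructor <;> norm_num
  have hfm : Measurable fun t : ℝ => t ^ c := by measurability
  have hf : MemLp (fun t : ℝ => t ^ c) (ENNReal.ofReal 2) μ := by
    refine MemLp.of_bound hfm.aestronglyMeasurable (x ^ c) ?_
    filter_upwards [hpos] with t ht
    have ht0 : 0 ≤ t := le_trans hy (le_of_lt ht.1)
    rw [Real.norm_of_nonneg (Real.rpow_nonneg ht0 c)]
    exact Real.rpow_le_rpow ht0 ht.2 hc
  have hg : MemLp (fun _ : ℝ => (1 : ℝ)) (ENNReal.ofReal 2) μ := memLp_const 1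
  have H := integral_mul_le_Lp_mul_Lq_of_nonneg hconj hf_nonneg hg_nonneg hf hg
  simp only [mul_one, Real.one_rpow] at H
  -- compute the integral of 1
  have hB : (∫ _ : ℝ, (1 : ℝ) ∂μ) = x - y := by
    rw [hμ, setIntegral_const, smul_eq_mul, mul_one, Real.volume_real_Ioc_of_le hxy]
  -- identify f^2 with t^(2*c)
  have hA : (∫ t, (t ^ c) ^ (2 : ℝ) ∂μ) = ∫ t in Ioc y x, t ^ (2 * c) := by
    rw [hμ]
    refine setIntegral_congr_fun hmeas fun t ht => ?_
    have ht0 : 0 ≤ t := le_trans hy (le_of_lt ht.1)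
    rw [← Real.rpow_mul ht0, mul_comm]
  rw [hA, hB] at H
  have hI : 0 ≤ ∫ t, t ^ c ∂μ := integral_nonneg_of_ae hf_nonneg
  have hA0 : 0 ≤ ∫ t in Ioc y x, t ^ (2 * c) := by
    refine integral_nonneg_of_ae ?_
    filter_upwards [hpos] with t ht
    exact Real.rpow_nonneg (le_trans hy (le_of_lt ht.1)) _
  have hB0 : 0 ≤ x - y := by linarith
  calc (∫ t in Ioc y x, t ^ c) ^ 2
      ≤ ((∫ t in Ioc y x, t ^ (2 * c)) ^ (1 / 2 : ℝ) * (x - y) ^ (1 / 2 : ℝ)) ^ 2 := by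
        exact pow_le_pow_left₀ hI H 2
    _ = (x - y) * ∫ t in Ioc y x, t ^ (2 * c) := by
        rw [mul_pow, ← Real.rpow_natCast (_ ^ (1/2 : ℝ)) 2, ← Real.rpow_natCast ((x - y) ^ (1/2 : ℝ)) 2,
          ← Real.rpow_mul hA0, ← Real.rpow_mul hB0]
        norm_num [mul_comm]

theorem stmt_3 (x y p : ℝ) (hx : 0 ≤ x) (hy : 0 ≤ y) (hp : 2 ≤ p) :
    4 * (p - 1) / p ^ 2 * (x ^ (p / 2) - y ^ (p / 2)) ^ 2 ≤
      (x - y) * (x ^ (p - 1) - y ^ (p - 1)) := by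
  -- WLOG y ≤ x
  wlog hxy : y ≤ x with Hw
  · have h := Hw y x p hy hx hp (le_of_not_ge hxy)
    calc 4 * (p - 1) / p ^ 2 * (x ^ (p / 2) - y ^ (p / 2)) ^ 2
        = 4 * (p - 1) / p ^ 2 * (y ^ (p / 2) - x ^ (p / 2)) ^ 2 := by ring
      _ ≤ (y - x) * (y ^ (p - 1) - x ^ (p - 1)) := h
      _ = (x - y) * (x ^ (p - 1) - y ^ (p - 1)) := by ring
  have hp0 : (0 : ℝ) < p := by linarith
  have hr1 : (-1 : ℝ) < p / 2 - 1 := by linarith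
  have hr2 : (-1 : ℝ) < p - 2 := by linarith
  have h1 : (∫ t in Ioc y x, t ^ (p / 2 - 1)) = (x ^ (p / 2) - y ^ (p / 2)) / (p / 2) := by
    rw [← intervalIntegral.integral_of_le hxy, integral_rpow (Or.inl hr1)]
    norm_num
  have h2 : (∫ t in Ioc y x, t ^ (2 * (p / 2 - 1))) = (x ^ (p - 1) - y ^ (p - 1)) / (p - 1) := by
    have : 2 * (p / 2 - 1) = p - 2 := by ring
    rw [this, ← intervalIntegral.integral_of_le hxy, integral_rpow (Or.inl hr2),
      show p - 2 + 1 = p - 1 by ring]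
  have key := aux_cs x y (p / 2 - 1) hy hxy (by linarith)
  rw [h1, h2] at key
  have hp1 : (0 : ℝ) < p - 1 := by linarith
  have hxy' : 0 ≤ x - y := by linarith
  have hmono : y ^ (p - 1) ≤ x ^ (p - 1) := Real.rpow_le_rpow hy hxy (by linarith)
  have hkey2 : (x ^ (p / 2) - y ^ (p / 2)) ^ 2 / (p / 2) ^ 2
      ≤ (x - y) * ((x ^ (p - 1) - y ^ (p - 1)) / (p - 1)) := by
    calc (x ^ (p / 2) - y ^ (p / 2)) ^ 2 / (p / 2) ^ 2
        = ((x ^ (p / 2) - y ^ (p / 2)) / (p / 2)) ^ 2 := by rw [div_pow]; ring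
      _ ≤ (x - y) * ((x ^ (p - 1) - y ^ (p - 1)) / (p - 1)) := key
  have hfinal : (p - 1) * ((x ^ (p / 2) - y ^ (p / 2)) ^ 2 / (p / 2) ^ 2)
      ≤ (p - 1) * ((x - y) * ((x ^ (p - 1) - y ^ (p - 1)) / (p - 1))) :=
    mul_le_mul_of_nonneg_left hkey2 (le_of_lt hp1)
  have e1 : (p - 1) * ((x ^ (p / 2) - y ^ (p / 2)) ^ 2 / (p / 2) ^ 2)
      = 4 * (p - 1) / p ^ 2 * (x ^ (p / 2) - y ^ (p / 2)) ^ 2 := by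
    field_simp
    ring
  have e2 : (p - 1) * ((x - y) * ((x ^ (p - 1) - y ^ (p - 1)) / (p - 1)))
      = (x - y) * (x ^ (p - 1) - y ^ (p - 1)) := by
    field_simp
  rw [e1, e2] at hfinal
  exact hfinal
end

section
/- Let μ be a probability measure on S = {0,…,n} and f : S → ℝ. Then Var_μ(f) ≤ n·∑_{i=0}^{n-1} (f(i+1) - f(i))²·μ({0,…,i})·μ({i+1,…,n}), where Var_μ(f) = ∑ₓ f(x)²μ(x) - (∑ₓ f(x)μ(x))². -/
open Finset

theorem stmt_8 (n : ℕ) (μ : ℕ → ℝ)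
    (hμ : ∀ x, 0 ≤ μ x) (hsum : ∑ x ∈ Finset.range (n + 1), μ x = 1)
    (f : ℕ → ℝ) :
    ∑ x ∈ Finset.range (n + 1), f x ^ 2 * μ x -
        (∑ x ∈ Finset.range (n + 1), f x * μ x) ^ 2 ≤
      (n : ℝ) * ∑ i ∈ Finset.range n, (f (i + 1) - f i) ^ 2 *
        (∑ k ∈ Finset.range (i + 1), μ k) * (∑ k ∈ Finset.Icc (i + 1) n, μ k) := by
  set S := Finset.range (n+1) with hS
  set A := ∑ x ∈ S, f x ^ 2 * μ x with hA
  set B := ∑ x ∈ S, f x * μ x with hB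
  set d : ℕ → ℝ := fun i => (f (i+1) - f i)^2 with hd
  set T : ℕ → ℕ → ℝ := fun x y => ∑ i ∈ Finset.range n,
    (if min x y ≤ i ∧ i < max x y then d i else 0) with hT
  -- Step 1: variance identity
  have inner : ∀ x, ∑ y ∈ S, μ x * μ y * (f x - f y)^2
      = f x ^ 2 * μ x * (∑ y ∈ S, μ y) + (∑ y ∈ S, f y ^ 2 * μ y) * μ x
        - (∑ y ∈ S, f y * μ y) * (2 * (f x * μ x)) := by
    intro x
    rw [Finset.mul_sum, Finset.sum_mul, Finset.sum_mul, ← Finset.sum_add_distrib,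
      ← Finset.sum_sub_distrib]
    exact Finset.sum_congr rfl fun y _ => by ring
  have step1 : ∑ x ∈ S, ∑ y ∈ S, μ x * μ y * (f x - f y)^2 = 2*(A - B^2) := by
    have : ∀ x, ∑ y ∈ S, μ x * μ y * (f x - f y)^2
        = f x ^ 2 * μ x + A * μ x - B * (2 * (f x * μ x)) := by
      intro x; rw [inner x, hsum, ← hA, ← hB, mul_one]
    rw [Finset.sum_congr rfl fun x _ => this x]
    rw [Finset.sum_sub_distrib, Finset.sum_add_distrib, ← Finset.mul_sum, hsum,
      ← Finset.mul_sum]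
    have : ∑ x ∈ S, 2 * (f x * μ x) = 2 * B := by rw [Finset.mul_sum]
    rw [this, ← hA]; ring
  -- pairwise bound
  have pairIco : ∀ x y, y ≤ x → x ≤ n →
      (f x - f y)^2 ≤ (n:ℝ) * ∑ i ∈ Finset.Ico y x, d i := by
    intro x y hy hx
    have ht : f x - f y = ∑ i ∈ Finset.Ico y x, (f (i+1) - f i) := by
      rw [Finset.sum_Ico_eq_sub _ hy, Finset.sum_range_sub, Finset.sum_range_sub]; ring
    rw [ht]
    calc (∑ i ∈ Finset.Ico y x, (f (i+1) - f i))^2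
        ≤ (Finset.Ico y x).card * ∑ i ∈ Finset.Ico y x, (f (i+1) - f i)^2 :=
          sq_sum_le_card_mul_sum_sq
      _ ≤ (n:ℝ) * ∑ i ∈ Finset.Ico y x, d i := by
          apply mul_le_mul_of_nonneg_right
          · rw [Nat.card_Ico]; exact_mod_cast le_trans (Nat.sub_le x y) hx
          · positivity
  have IcoT : ∀ x y, y ≤ x → x ≤ n → ∑ i ∈ Finset.Ico y x, d i = T x y := by
    intro x y hy hx
    rw [hT]
    simp only [min_eq_right hy, max_eq_left hy]
    rw [← Finset.sum_filter]
    congr 1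
    ext i
    simp only [Finset.mem_Ico, Finset.mem_filter, Finset.mem_range]
    omega
  have pair : ∀ x ∈ S, ∀ y ∈ S, (f x - f y)^2 ≤ (n:ℝ) * T x y := by
    intro x hx y hy
    rw [hS, Finset.mem_range] at hx hy
    rcases le_total y x with h | h
    · rw [← IcoT x y h (by omega)]; exact pairIco x y h (by omega)
    · rw [show T x y = T y x by rw [hT]; simp [min_comm, max_comm]]
      rw [← IcoT y x h (by omega), show (f x - f y)^2 = (f y - f x)^2 by ring]
      exact pairIco y x h (by omega)
  -- Step 2: bound the double sum
  have step2 : ∑ x ∈ S, ∑ y ∈ S, μ x * μ y * (f x - f y)^2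
      ≤ ∑ x ∈ S, ∑ y ∈ S, μ x * μ y * ((n:ℝ) * T x y) := by
    apply Finset.sum_le_sum; intro x hx
    apply Finset.sum_le_sum; intro y hy
    exact mul_le_mul_of_nonneg_left (pair x hx y hy) (mul_nonneg (hμ x) (hμ y))
  -- Step 3: evaluate the right double sum
  have peri : ∀ i ∈ Finset.range n,
      ∑ x ∈ S, ∑ y ∈ S, μ x * μ y * (if min x y ≤ i ∧ i < max x y then d i else 0)
      = 2 * (d i * (∑ k ∈ Finset.range (i+1), μ k) * (∑ k ∈ Finset.Icc (i+1) n, μ k)) := by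
    intro i hi
    rw [Finset.mem_range] at hi
    have split : ∀ x y : ℕ, μ x * μ y * (if min x y ≤ i ∧ i < max x y then d i else 0)
        = d i * ((if i < x then μ x else 0) * (if y ≤ i then μ y else 0))
          + d i * ((if x ≤ i then μ x else 0) * (if i < y then μ y else 0)) := by
      intro x y
      rcases le_or_gt x i with h1 | h1 <;> rcases le_or_gt y i with h2 | h2
      · rw [if_neg (by omega : ¬(min x y ≤ i ∧ i < max x y)),
          if_neg (by omega : ¬ i < x), if_neg (by omega : ¬ i < y)]; ring
      · rw [if_pos (by omega : min x y ≤ i ∧ i < max x y),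
          if_neg (by omega : ¬ i < x), if_neg (by omega : ¬ y ≤ i),
          if_pos h1, if_pos h2]; ring
      · rw [if_pos (by omega : min x y ≤ i ∧ i < max x y),
          if_pos h1, if_pos h2, if_neg (by omega : ¬ x ≤ i),
          if_neg (by omega : ¬ i < y)]; ring
      · rw [if_neg (by omega : ¬(min x y ≤ i ∧ i < max x y)),
          if_neg (by omega : ¬ y ≤ i), if_neg (by omega : ¬ x ≤ i)]; ring
    simp_rw [split, Finset.sum_add_distrib]
    have hio : ∑ x ∈ S, (if i < x then μ x else 0) = ∑ k ∈ Finset.Icc (i+1) n, μ k := by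
      rw [← Finset.sum_filter]
      congr 1; ext x
      simp only [Finset.mem_filter, Finset.mem_range, Finset.mem_Icc, hS]
      omega
    have hlo : ∑ x ∈ S, (if x ≤ i then μ x else 0) = ∑ k ∈ Finset.range (i+1), μ k := by
      rw [← Finset.sum_filter]
      congr 1; ext x
      simp only [Finset.mem_filter, Finset.mem_range, hS]
      omega
    have e1 : ∑ x ∈ S, ∑ y ∈ S, d i * ((if i < x then μ x else 0) * (if y ≤ i then μ y else 0))
        = d i * ((∑ k ∈ Finset.Icc (i+1) n, μ k) * (∑ k ∈ Finset.range (i+1), μ k)) := by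
      simp_rw [← Finset.mul_sum, ← Finset.sum_mul]
      rw [hlo, hio]
    have e2 : ∑ x ∈ S, ∑ y ∈ S, d i * ((if x ≤ i then μ x else 0) * (if i < y then μ y else 0))
        = d i * ((∑ k ∈ Finset.range (i+1), μ k) * (∑ k ∈ Finset.Icc (i+1) n, μ k)) := by
      simp_rw [← Finset.mul_sum, ← Finset.sum_mul]
      rw [hlo, hio]
    rw [e1, e2]; ring
  have step3 : ∑ x ∈ S, ∑ y ∈ S, μ x * μ y * ((n:ℝ) * T x y)
      = 2 * ((n:ℝ) * ∑ i ∈ Finset.range n, d i *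
        (∑ k ∈ Finset.range (i+1), μ k) * (∑ k ∈ Finset.Icc (i+1) n, μ k)) := by
    have swap : ∑ x ∈ S, ∑ y ∈ S, μ x * μ y * T x y
        = ∑ i ∈ Finset.range n,
            ∑ x ∈ S, ∑ y ∈ S, μ x * μ y * (if min x y ≤ i ∧ i < max x y then d i else 0) := by
      simp_rw [hT, Finset.mul_sum]
      rw [Finset.sum_congr rfl fun x _ => Finset.sum_comm (s := S) (t := Finset.range n)
        (f := fun y i => μ x * μ y * (if min x y ≤ i ∧ i < max x y then d i else 0)),
        Finset.sum_comm]
    have : ∑ x ∈ S, ∑ y ∈ S, μ x * μ y * ((n:ℝ) * T x y)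
        = (n:ℝ) * ∑ x ∈ S, ∑ y ∈ S, μ x * μ y * T x y := by
      rw [Finset.mul_sum]
      apply Finset.sum_congr rfl; intro x _
      rw [Finset.mul_sum]
      apply Finset.sum_congr rfl; intro y _
      ring
    rw [this, swap, Finset.sum_congr rfl peri, ← Finset.mul_sum]
    ring
  linarith [step1 ▸ step2, step3]
end

section
/- Let S be a finite set and suppose ψ : [0,t] → (S → ℝ) satisfies the linear ODE -(∂/∂s)ψ_s = λ_s·L_s ψ_s - H_s·ψ_s on [0,t] with terminal condition ψ_t = f, where for each s, L_s is a Q-matrix satisfying detailed balance with respect to a probability measure μ_s on S (so that ∑ₓ (L_s g)(x)μ_s(x) = 0 for all g), μ_s(x) = exp(-∫₀ˢ H_r(x) dr)·μ₀(x), and λ_s ≥ 0. Then s ↦ ∑ₓ ψ_s(x)·μ_s(x) is constant on [0,t]; in particular ∑ₓ ψ_s(x)μ_s(x) = ∑ₓ f(x)μ_t(x) for all s ∈ [0,t]. -/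
theorem stmt_13 {S : Type*} [Fintype S] (t : ℝ) (ht : 0 ≤ t)
    (ψ : ℝ → S → ℝ) (μ : ℝ → S → ℝ) (μ₀ : S → ℝ)
    (L : ℝ → S → S → ℝ) (H : ℝ → S → ℝ) (lam : ℝ → ℝ) (f : S → ℝ)
    (hHcont : ∀ x, Continuous fun r => H r x)
    (hμ : ∀ s x, μ s x = Real.exp (-∫ r in (0 : ℝ)..s, H r x) * μ₀ x)
    (hμ₀ : ∀ x, 0 ≤ μ₀ x) (hμ₀sum : ∑ x, μ₀ x = 1)
    (hQ1 : ∀ s ∈ Set.Icc 0 t, ∀ x y, x ≠ y → 0 ≤ L s x y)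
    (hQ2 : ∀ s ∈ Set.Icc 0 t, ∀ x, ∑ y, L s x y = 0)
    (hdb : ∀ s ∈ Set.Icc 0 t, ∀ x y, μ s x * L s x y = μ s y * L s y x)
    (hlam : ∀ s ∈ Set.Icc 0 t, 0 ≤ lam s)
    (hODE : ∀ s ∈ Set.Icc 0 t, ∀ x, HasDerivAt (fun u => ψ u x)
      (-(lam s * (∑ y, L s x y * ψ s y) - H s x * ψ s x)) s)
    (hterm : ψ t = f) :
    ∀ s ∈ Set.Icc 0 t, ∑ x, ψ s x * μ s x = ∑ x, f x * μ t x := by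
  -- derivative of μ
  have hμderiv : ∀ (s : ℝ) (x : S),
      HasDerivAt (fun u => μ u x) (-H s x * μ s x) s := by
    intro s x
    have hI : HasDerivAt (fun u => ∫ r in (0 : ℝ)..u, H r x) (H s x) s :=
      ((hHcont x).integral_hasStrictDerivAt 0 s).hasDerivAt
    have h1 : HasDerivAt (fun u => Real.exp (-∫ r in (0 : ℝ)..u, H r x) * μ₀ x)
        (Real.exp (-∫ r in (0 : ℝ)..s, H r x) * (-H s x) * μ₀ x) s :=
      ((hI.neg).exp).mul_const (μ₀ x)
    have : HasDerivAt (fun u => μ u x)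
        (Real.exp (-∫ r in (0 : ℝ)..s, H r x) * (-H s x) * μ₀ x) s := by
      simpa only [← hμ] using h1
    convert this using 1
    rw [hμ]; ring
  -- derivative of the total mass is zero on Icc
  have hg : ∀ s ∈ Set.Icc 0 t,
      HasDerivAt (fun u => ∑ x, ψ u x * μ u x) 0 s := by
    intro s hs
    have h : HasDerivAt (fun u => ∑ x, ψ u x * μ u x)
        (∑ x, (-(lam s * (∑ y, L s x y * ψ s y) - H s x * ψ s x) * μ s x
          + ψ s x * (-H s x * μ s x))) s := by
      apply HasDerivAt.fun_sum
      intro x _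
      exact (hODE s hs x).mul (hμderiv s x)
    convert h using 1
    have hsum : ∑ x, μ s x * ∑ y, L s x y * ψ s y = 0 := by
      have : ∑ x, μ s x * ∑ y, L s x y * ψ s y
          = ∑ y, ψ s y * μ s y * ∑ x, L s y x := by
        simp_rw [Finset.mul_sum]
        rw [Finset.sum_comm]
        congr 1; ext y
        congr 1; ext x
        rw [show μ s x * (L s x y * ψ s y) = μ s x * L s x y * ψ s y by ring,
          hdb s hs x y]
        ring
      rw [this]
      simp [hQ2 s hs]
    have : ∑ x, (-(lam s * (∑ y, L s x y * ψ s y) - H s x * ψ s x) * μ s x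
          + ψ s x * (-H s x * μ s x))
        = -lam s * ∑ x, μ s x * ∑ y, L s x y * ψ s y := by
      rw [Finset.mul_sum]
      congr 1; ext x; ring
    rw [this, hsum, mul_zero]
  -- constancy on the interval
  have hconst : ∀ s ∈ Set.Icc 0 t,
      ∑ x, ψ s x * μ s x = ∑ x, ψ 0 x * μ 0 x := by
    apply constant_of_has_deriv_right_zero
    · intro s hs
      exact (hg s hs).continuousAt.continuousWithinAt
    · intro s hs
      exact (hg s (Set.mem_Icc_of_Ico hs)).hasDerivWithinAt
  intro s hs
  rw [hconst s hs, ← hconst t (Set.right_mem_Icc.2 ht), hterm]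
end

section
/- Fix n ≥ 4, S = {0,…,n}, μ a probability measure on S with μ(i) = 1/(n+1) for 1 ≤ i ≤ n-1, μ(0), μ(n) > 0, μ(0) + μ(n) = 2/(n+1). Define conductances a(i) = (1/2)·min(μ(i), μ(i+1)) and Dirichlet form E(f) = ∑_{i=0}^{n-1}(f(i+1)-f(i))²·a(i). Then the optimal Poincaré constant C = sup{ Var_μ(f)/E(f) : f nonconstant } satisfies C ≤ n·max((n+1)/2, 2). -/
open Finset

private lemma var_ident (μ f : ℕ → ℝ) (m : ℕ) :
    (∑ x ∈ range m, f x ^ 2 * μ x) * (∑ x ∈ range m, μ x)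
        - (∑ x ∈ range m, f x * μ x) ^ 2
      = ∑ y ∈ range m, ∑ x ∈ range y, μ x * μ y * (f x - f y) ^ 2 := by
  induction m with
  | zero => simp
  | succ m ih =>
    rw [sum_range_succ, sum_range_succ, sum_range_succ, sum_range_succ]
    have h : ∑ x ∈ range m, μ x * μ m * (f x - f m) ^ 2
        = (∑ x ∈ range m, f x ^ 2 * μ x) * μ m
          + f m ^ 2 * μ m * (∑ x ∈ range m, μ x)
          - 2 * (f m * μ m) * (∑ x ∈ range m, f x * μ x) := by
      have e : ∀ x, μ x * μ m * (f x - f m) ^ 2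
          = f x ^ 2 * μ x * μ m + f m ^ 2 * μ m * μ x - 2 * (f m * μ m) * (f x * μ x) := by
        intro x; ring
      simp_rw [e, sum_sub_distrib, sum_add_distrib, ← sum_mul, ← mul_sum]
    linear_combination ih - h

private lemma pair_bound (f : ℕ → ℝ) (c : ℝ) (x y : ℕ) (hxy : x < y)
    (hc : ((y - x : ℕ) : ℝ) ≤ c) :
    (f x - f y) ^ 2 ≤ c * ∑ i ∈ Ico x y, (f (i + 1) - f i) ^ 2 := by
  have htel : ∑ i ∈ Ico x y, (f (i + 1) - f i) = f y - f x := by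
    have := sum_range_add_sum_Ico (fun i => f (i + 1) - f i) hxy.le
    rw [sum_range_sub, sum_range_sub] at this
    linarith
  have hcs := sq_sum_le_card_mul_sum_sq (s := Ico x y) (f := fun i => f (i + 1) - f i)
  rw [htel, Nat.card_Ico] at hcs
  have hnn : (0:ℝ) ≤ ∑ i ∈ Ico x y, (f (i + 1) - f i) ^ 2 :=
    sum_nonneg fun i _ => sq_nonneg _
  calc (f x - f y) ^ 2 = (f y - f x) ^ 2 := by ring
    _ ≤ ((y - x : ℕ) : ℝ) * ∑ i ∈ Ico x y, (f (i + 1) - f i) ^ 2 := hcs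
    _ ≤ c * ∑ i ∈ Ico x y, (f (i + 1) - f i) ^ 2 :=
        mul_le_mul_of_nonneg_right hc hnn

private lemma swap_lemma (μ g : ℕ → ℝ) (n : ℕ) :
    ∑ y ∈ range (n+1), ∑ x ∈ range y, μ x * μ y * ∑ i ∈ Ico x y, g i
      = ∑ i ∈ range n, g i * ((∑ x ∈ range (i+1), μ x) * (∑ y ∈ Ico (i+1) (n+1), μ y)) := by
  calc ∑ y ∈ range (n+1), ∑ x ∈ range y, μ x * μ y * ∑ i ∈ Ico x y, g i
      = ∑ y ∈ range (n+1), ∑ x ∈ range y, ∑ i ∈ range n,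
          (if i ∈ Ico x y then μ x * μ y * g i else 0) := by
        refine sum_congr rfl fun y hy => sum_congr rfl fun x hx => ?_
        rw [sum_ite_mem, inter_eq_right.mpr, mul_sum]
        intro i hi
        rw [mem_range]
        exact lt_of_lt_of_le (mem_Ico.mp hi).2 (Nat.lt_succ_iff.mp (mem_range.mp hy))
    _ = ∑ y ∈ range (n+1), ∑ i ∈ range n, ∑ x ∈ range y,
          (if i ∈ Ico x y then μ x * μ y * g i else 0) :=
        sum_congr rfl fun y _ => sum_comm
    _ = ∑ i ∈ range n, ∑ y ∈ range (n+1), ∑ x ∈ range y,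
          (if i ∈ Ico x y then μ x * μ y * g i else 0) := sum_comm
    _ = ∑ i ∈ range n, g i * ((∑ x ∈ range (i+1), μ x) * (∑ y ∈ Ico (i+1) (n+1), μ y)) := by
        refine sum_congr rfl fun i hi => ?_
        have hy1 : ∀ y, ∑ x ∈ range y, (if i ∈ Ico x y then μ x * μ y * g i else 0)
            = if i < y then (∑ x ∈ range (i+1), μ x) * (μ y * g i) else 0 := by
          intro y
          by_cases h : i < y
          · rw [if_pos h, sum_mul]
            have : ∀ x, (i ∈ Ico x y) = (x ∈ range (i+1)) := by
              intro x
              simp only [mem_Ico, mem_range, Nat.lt_succ_iff, eq_iff_iff]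
              constructor
              · exact fun hh => hh.1
              · exact fun hh => ⟨hh, h⟩
            simp_rw [this]
            rw [sum_ite_mem, inter_eq_right.mpr (range_subset_range.mpr h)]
            exact sum_congr rfl fun x _ => by ring
          · rw [if_neg h]
            refine sum_eq_zero fun x hx => ?_
            rw [if_neg]
            simp only [mem_Ico, not_and]
            exact fun _ => h
        simp_rw [hy1]
        have : ∀ y ∈ range (n+1),
            (if i < y then (∑ x ∈ range (i+1), μ x) * (μ y * g i) else 0)
            = (if y ∈ Ico (i+1) (n+1) then (∑ x ∈ range (i+1), μ x) * (μ y * g i) else 0) := by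
          intro y hy
          rw [mem_range] at hy
          congr 1
          simp only [mem_Ico, eq_iff_iff, Nat.succ_le_iff]
          exact ⟨fun hh => ⟨hh, hy⟩, fun hh => hh.1⟩
        rw [sum_congr rfl this, sum_ite_mem, inter_eq_right.mpr]
        · conv_rhs => rw [mul_sum, mul_sum]
          exact sum_congr rfl fun y _ => by ring
        · intro y hy
          rw [mem_range]
          exact (mem_Ico.mp hy).2

set_option maxHeartbeats 1000000 in
theorem stmt_16 (n : ℕ) (hn : 4 ≤ n) (μ : ℕ → ℝ) (a : ℕ → ℝ)
    (E : (ℕ → ℝ) → ℝ)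
    (hμmid : ∀ i, 1 ≤ i → i ≤ n - 1 → μ i = 1 / (n + 1))
    (hμ0 : 0 < μ 0) (hμn : 0 < μ n)
    (hμends : μ 0 + μ n = 2 / (n + 1))
    (ha : ∀ i, a i = (1 / 2) * min (μ i) (μ (i + 1)))
    (hE : ∀ f : ℕ → ℝ, E f = ∑ i ∈ Finset.range n, (f (i + 1) - f i) ^ 2 * a i) :
    ∀ f : ℕ → ℝ,
      ∑ x ∈ Finset.range (n + 1), f x ^ 2 * μ x -
          (∑ x ∈ Finset.range (n + 1), f x * μ x) ^ 2 ≤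
        (n : ℝ) * max ((n + 1) / 2) 2 * E f := by
  intro f
  set M : ℝ := (((n + 1) / 2 ⊔ 2 : ℕ) : ℝ) with hMdef
  set m : ℝ := 1 / ((n : ℝ) + 1) with hmdef
  have hnp : (0:ℝ) < (n:ℝ) + 1 := by positivity
  have hm0 : 0 < m := by rw [hmdef]; positivity
  have hm : m * ((n:ℝ) + 1) = 1 := by rw [hmdef]; field_simp
  have hn4 : (4:ℝ) ≤ (n:ℝ) := by exact_mod_cast hn
  have hm5 : m ≤ 1/5 := by nlinarith
  have hM2 : (2:ℝ) ≤ M := by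
    rw [hMdef]; exact_mod_cast Nat.le_max_right ((n+1)/2) 2
  have hMn : (n:ℝ) ≤ 2 * M := by
    have h1 : n ≤ 2 * ((n + 1) / 2) := by omega
    have h2 : (n : ℕ) ≤ 2 * ((n + 1) / 2 ⊔ 2) :=
      le_trans h1 (Nat.mul_le_mul_left 2 (Nat.le_max_left _ _))
    rw [hMdef]; exact_mod_cast h2
  have hends : μ 0 + μ n = 2 * m := by
    rw [hμends, hmdef]; ring
  have hμnn : ∀ x, x ≤ n → 0 ≤ μ x := by
    intro x hx
    rcases Nat.eq_zero_or_pos x with h0 | h1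
    · subst h0; exact hμ0.le
    rcases eq_or_lt_of_le hx with h2 | h2
    · subst h2; exact hμn.le
    · rw [hμmid x h1 (by omega)]; positivity
  have hmid : ∀ x, 1 ≤ x → x ≤ n - 1 → μ x = m := by
    intro x h1 h2; rw [hμmid x h1 h2, hmdef]
  have hmidsum : ∑ x ∈ Ico 1 n, μ x = ((n:ℝ) - 1) * m := by
    have h : ∀ x ∈ Ico 1 n, μ x = m := by
      intro x hx
      rw [mem_Ico] at hx
      exact hmid x hx.1 (by omega)
    rw [sum_congr rfl h, sum_const, Nat.card_Ico, nsmul_eq_mul]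
    congr 1
    push_cast [Nat.cast_sub (by omega : 1 ≤ n)]
    ring
  have hsum : ∑ x ∈ range (n + 1), μ x = 1 := by
    rw [Finset.sum_range_succ,
      ← sum_range_add_sum_Ico μ (by omega : 1 ≤ n), sum_range_one, hmidsum]
    nlinarith [hends, hm]
  set P : ℕ → ℝ := fun i => ∑ x ∈ range (i+1), μ x with hP
  set Q : ℕ → ℝ := fun i => ∑ y ∈ Ico (i+1) (n+1), μ y with hQ
  have hPQ : ∀ i, i < n → P i + Q i = 1 := by
    intro i hi
    rw [hP, hQ]
    simp only
    rw [sum_range_add_sum_Ico μ (by omega : i + 1 ≤ n + 1), hsum]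
  have hPpos : ∀ i, i < n → 0 ≤ P i :=
    fun i hi => Finset.sum_nonneg fun x hx =>
      hμnn x (by have := Finset.mem_range.mp hx; omega)
  have hQpos : ∀ i, i < n → 0 ≤ Q i :=
    fun i hi => Finset.sum_nonneg fun x hx =>
      hμnn x (by have := (Finset.mem_Ico.mp hx).2; omega)
  -- the "quarter" bound, used when a i = m / 2
  have quarter : ∀ p q : ℝ, 0 ≤ p → 0 ≤ q → p + q = 1 →
      ((n:ℝ) - 1) * (p * q) + μ 0 * μ n ≤ (n:ℝ) * M * ((1:ℝ)/2 * m) := by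
    intro p q hp hq hpq
    have hq14 : p * q ≤ 1/4 := by nlinarith [sq_nonneg (p - q)]
    have hprod : μ 0 * μ n ≤ m ^ 2 := by nlinarith [sq_nonneg (μ 0 - μ n)]
    have hn1 : (0:ℝ) ≤ (n:ℝ) - 1 := by linarith
    have e0 : ((n:ℝ) - 1) * (p * q) ≤ ((n:ℝ) - 1) * (1/4) :=
      mul_le_mul_of_nonneg_left hq14 hn1
    have e1 : ((n:ℝ) - 1) * (1/4) = ((n:ℝ) * (n:ℝ) - 1) * m / 4 := by
      linear_combination (-((n:ℝ) - 1)/4) * hm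
    have e2 : m ^ 2 ≤ m * (1/4) := by nlinarith
    have hbudget : (n:ℝ) * (n:ℝ) * m / 4 ≤ (n:ℝ) * M * ((1:ℝ)/2 * m) := by
      nlinarith [mul_nonneg (mul_nonneg (by positivity : (0:ℝ) ≤ (n:ℝ)) hm0.le)
        (by linarith : (0:ℝ) ≤ 2 * M - (n:ℝ))]
    nlinarith [e0, e1, e2, hprod, hbudget]
  -- key per-edge bound
  have key : ∀ i, i < n → ((n:ℝ) - 1) * (P i * Q i) + μ 0 * μ n ≤ (n:ℝ) * M * a i := by
    intro i hi
    have hsum1 : P i + Q i = 1 := hPQ i hi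
    have hp := hPpos i hi
    have hq := hQpos i hi
    by_cases h0 : i = 0
    · subst h0
      have hP0 : P 0 = μ 0 := by rw [hP]; exact sum_range_one μ
      have hμ1 : μ 1 = m := hmid 1 (by omega) (by omega)
      rw [ha 0, hμ1]
      rcases le_total (μ 0) m with hmin | hmin
      · rw [min_eq_left hmin]
        rw [hP0] at hsum1 hp ⊢
        have hQ1 : Q 0 ≤ 1 := by linarith
        have hμn2m : μ n ≤ 2 * m := by linarith
        nlinarith [mul_le_mul_of_nonneg_left hQ1
            (mul_nonneg (by linarith : (0:ℝ) ≤ (n:ℝ) - 1) hμ0.le),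
          mul_le_mul_of_nonneg_left hμn2m hμ0.le,
          mul_le_mul_of_nonneg_left hM2
            (by positivity : (0:ℝ) ≤ (n:ℝ) * (μ 0 / 2)), hm, hμ0.le, hq]
      · rw [min_eq_right hmin]
        exact quarter (P 0) (Q 0) hp hq hsum1
    · by_cases hlast : i = n - 1
      · have hi1 : i + 1 = n := by omega
        have hQn : Q i = μ n := by
          rw [hQ]; simp only [hi1]
          rw [show Ico n (n+1) = {n} by rw [Finset.Ico_add_one_right_eq_Icc, Finset.Icc_self], sum_singleton]
        have hμi : μ i = m := hmid i (by omega) (by omega)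
        rw [ha i, hi1, hμi]
        rcases le_total (μ n) m with hmin | hmin
        · rw [min_eq_right hmin]
          rw [hQn] at hsum1 hq ⊢
          have hP1 : P i ≤ 1 := by linarith
          have hμ02m : μ 0 ≤ 2 * m := by linarith
          nlinarith [mul_le_mul_of_nonneg_left hP1
              (mul_nonneg (by linarith : (0:ℝ) ≤ (n:ℝ) - 1) hμn.le),
            mul_le_mul_of_nonneg_right hμ02m hμn.le,
            mul_le_mul_of_nonneg_left hM2
              (by positivity : (0:ℝ) ≤ (n:ℝ) * (μ n / 2)), hm, hμn.le, hp]
        · rw [min_eq_left hmin]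
          exact quarter (P i) (Q i) hp hq hsum1
      · have hμi : μ i = m := hmid i (by omega) (by omega)
        have hμi1 : μ (i+1) = m := hmid (i+1) (by omega) (by omega)
        rw [ha i, hμi, hμi1, min_self]
        exact quarter (P i) (Q i) hp hq hsum1
  -- main chain
  have hfinal :
      ∑ x ∈ range (n + 1), f x ^ 2 * μ x - (∑ x ∈ range (n + 1), f x * μ x) ^ 2
        ≤ (n : ℝ) * M * E f := by
    calc ∑ x ∈ range (n + 1), f x ^ 2 * μ x - (∑ x ∈ range (n + 1), f x * μ x) ^ 2
        = ∑ y ∈ range (n+1), ∑ x ∈ range y, μ x * μ y * (f x - f y) ^ 2 := by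
          have h := var_ident μ f (n+1)
          rw [hsum, mul_one] at h
          exact h
      _ ≤ ∑ y ∈ range (n+1), ∑ x ∈ range y,
            (μ x * μ y * (((n:ℝ) - 1) * ∑ i ∈ Ico x y, (f (i+1) - f i) ^ 2)
              + (if x = 0 ∧ y = n then μ 0 * μ n * ∑ i ∈ range n, (f (i+1) - f i) ^ 2
                 else 0)) := by
          refine sum_le_sum fun y hy => sum_le_sum fun x hx => ?_
          have hy' : y ≤ n := Nat.lt_succ_iff.mp (mem_range.mp hy)
          have hx' : x < y := mem_range.mp hx
          have hμxy : 0 ≤ μ x * μ y := mul_nonneg (hμnn x (by omega)) (hμnn y hy')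
          by_cases hp : x = 0 ∧ y = n
          · obtain ⟨hx0, hyn⟩ := hp
            rw [if_pos ⟨hx0, hyn⟩, hx0, hyn]
            have hpb := pair_bound f ((n:ℝ)) 0 n (by omega) (by simp)
            rw [show Ico 0 n = range n from Nat.Ico_zero_eq_range n] at hpb
            have h2 := mul_le_mul_of_nonneg_left hpb (mul_nonneg hμ0.le hμn.le)
            rw [show Ico 0 n = range n from Nat.Ico_zero_eq_range n]
            calc μ 0 * μ n * (f 0 - f n) ^ 2
                ≤ μ 0 * μ n * ((n:ℝ) * ∑ i ∈ range n, (f (i+1) - f i) ^ 2) := h2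
              _ = μ 0 * μ n * (((n:ℝ) - 1) * ∑ i ∈ range n, (f (i+1) - f i) ^ 2)
                  + μ 0 * μ n * ∑ i ∈ range n, (f (i+1) - f i) ^ 2 := by ring
          · rw [if_neg hp, add_zero]
            refine mul_le_mul_of_nonneg_left (pair_bound f ((n:ℝ) - 1) x y hx' ?_) hμxy
            have hyx : y - x ≤ n - 1 := by omega
            calc ((y - x : ℕ) : ℝ) ≤ ((n - 1 : ℕ) : ℝ) := by exact_mod_cast hyx
              _ = (n:ℝ) - 1 := by
                  push_cast [Nat.cast_sub (by omega : 1 ≤ n)]; ring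
      _ = ((n:ℝ) - 1) * (∑ y ∈ range (n+1), ∑ x ∈ range y,
              μ x * μ y * ∑ i ∈ Ico x y, (f (i+1) - f i) ^ 2)
            + μ 0 * μ n * ∑ i ∈ range n, (f (i+1) - f i) ^ 2 := by
          simp only [sum_add_distrib]
          congr 1
          · rw [mul_sum]
            refine sum_congr rfl fun y _ => ?_
            rw [mul_sum]
            exact sum_congr rfl fun x _ => by ring
          · have h1 : ∀ y ∈ range (n+1),
                (∑ x ∈ range y, if x = 0 ∧ y = n
                    then μ 0 * μ n * ∑ i ∈ range n, (f (i+1) - f i) ^ 2 else 0)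
                = if y = n then μ 0 * μ n * ∑ i ∈ range n, (f (i+1) - f i) ^ 2 else 0 := by
              intro y hy
              by_cases hyn : y = n
              · rw [if_pos hyn]
                simp only [hyn, and_true]
                rw [Finset.sum_ite_eq' (range n) 0
                  (fun _ => μ 0 * μ n * ∑ i ∈ range n, (f (i+1) - f i) ^ 2)]
                rw [if_pos (mem_range.mpr (by omega))]
              · rw [if_neg hyn]
                exact sum_eq_zero fun x hx => if_neg (by tauto)
            rw [sum_congr rfl h1,
              Finset.sum_ite_eq' (range (n+1)) n
                (fun _ => μ 0 * μ n * ∑ i ∈ range n, (f (i+1) - f i) ^ 2),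
              if_pos (self_mem_range_succ n)]
      _ = ((n:ℝ) - 1) * (∑ i ∈ range n, (f (i+1) - f i) ^ 2 * (P i * Q i))
            + μ 0 * μ n * ∑ i ∈ range n, (f (i+1) - f i) ^ 2 := by
          rw [swap_lemma μ (fun i => (f (i+1) - f i) ^ 2) n]
      _ = ∑ i ∈ range n, (f (i+1) - f i) ^ 2 * (((n:ℝ) - 1) * (P i * Q i) + μ 0 * μ n) := by
          rw [mul_sum, mul_sum, ← sum_add_distrib]
          exact sum_congr rfl fun i _ => by ring
      _ ≤ ∑ i ∈ range n, (f (i+1) - f i) ^ 2 * ((n:ℝ) * M * a i) := by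
          refine sum_le_sum fun i hi => ?_
          exact mul_le_mul_of_nonneg_left (key i (mem_range.mp hi)) (sq_nonneg _)
      _ = (n : ℝ) * M * E f := by
          rw [hE f, mul_sum]
          exact sum_congr rfl fun i _ => by ring
  exact hfinal
end
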